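/- arXiv:1809.09415 — 8 statements merged into one kernel-verified Lean document; each statement's English description precedes it below -/
import Mathlib

section
/- If a finite automaton A satisfies the EDA pattern (there is a state p and a finite word v with two distinct paths from p to p labelled v), then A satisfies the IDA pattern (there are distinct states p, q and a word v with paths p→p, p→q, and q→q all labelled v). -/
structure NAuto (Q A : Type) where
  Δ : Q → A → Q → Prop
  Q0 : Set Q
  F : Set Q

def IsPath {Q A : Type} (δ : Q → A → Q → Prop) (π : List Q) (v : List A) (p q : Q) : Prop :=
  π.length = v.length + 1 ∧ π.head? = some p ∧ π.getLast? = some q ∧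
  ∀ (i : ℕ) a s t, v[i]? = some a → π[i]? = some s → π[i+1]? = some t → δ s a t

def EDAat {Q A : Type} (M : NAuto Q A) (p : Q) : Prop :=
  ∃ (v : List A) (π₁ π₂ : List Q), π₁ ≠ π₂ ∧ IsPath M.Δ π₁ v p p ∧ IsPath M.Δ π₂ v p p

def EDA {Q A : Type} (M : NAuto Q A) : Prop := ∃ p, EDAat M p

def EDAF {Q A : Type} (M : NAuto Q A) : Prop := ∃ p ∈ M.F, EDAat M p

def IDAat {Q A : Type} (M : NAuto Q A) (p q : Q) : Prop :=
  p ≠ q ∧ ∃ (v : List A) (π₁ π₂ π₃ : List Q),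
    IsPath M.Δ π₁ v p p ∧ IsPath M.Δ π₂ v p q ∧ IsPath M.Δ π₃ v q q

def IDA {Q A : Type} (M : NAuto Q A) : Prop := ∃ p q, IDAat M p q

def IDAF {Q A : Type} (M : NAuto Q A) : Prop := ∃ p q, q ∈ M.F ∧ IDAat M p q

def BuchiRuns {Q A : Type} (M : NAuto Q A) (w : ℕ → A) : Set (ℕ → Q) :=
  {ρ | ρ 0 ∈ M.Q0 ∧ (∀ i, M.Δ (ρ i) (w i) (ρ (i+1))) ∧ ∀ n, ∃ m ≥ n, ρ m ∈ M.F}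

def uvWord {A : Type} [Inhabited A] (u v : List A) : ℕ → A :=
  fun i => if i < u.length then u.getD i default else v.getD ((i - u.length) % v.length) default

/-- A cleaner characterization of `IsPath` via `getElem?`. -/
lemma isPath_iff {Q A : Type} (δ : Q → A → Q → Prop) (π : List Q) (v : List A) (p q : Q) :
    IsPath δ π v p q ↔ π.length = v.length + 1 ∧ π[0]? = some p ∧ π[v.length]? = some q ∧
      ∀ i a s t, v[i]? = some a → π[i]? = some s → π[i+1]? = some t → δ s a t := by
  unfold IsPath
  constructor
  · rintro ⟨hl, hh, hg, ht⟩
    refine ⟨hl, ?_, ?_, ?_⟩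
    · rwa [← List.head?_eq_getElem?]
    · rw [List.getLast?_eq_getElem?, hl] at hg; simpa using hg
    · intro i a s t hv hs htt
      exact ht i a s t hv hs htt
  · rintro ⟨hl, hh, hg, ht⟩
    refine ⟨hl, ?_, ?_, ?_⟩
    · rwa [List.head?_eq_getElem?]
    · rw [List.getLast?_eq_getElem?, hl]; simpa using hg
    · intro i a s t hv hs htt
      exact ht i a s t hv hs htt

lemma isPath_append {Q A : Type} {δ : Q → A → Q → Prop} {π₁ π₂ : List Q} {v₁ v₂ : List A}
    {p q r : Q} (h₁ : IsPath δ π₁ v₁ p q) (h₂ : IsPath δ π₂ v₂ q r) :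
    IsPath δ (π₁ ++ π₂.tail) (v₁ ++ v₂) p r := by
  rw [isPath_iff] at h₁ h₂ ⊢
  obtain ⟨hl₁, hh₁, hg₁, ht₁⟩ := h₁
  obtain ⟨hl₂, hh₂, hg₂, ht₂⟩ := h₂
  have hπ₂ : π₂ ≠ [] := by intro e; rw [e] at hl₂; simp at hl₂
  -- key index computation: element of π₁ ++ π₂.tail at index v₁.length + j is π₂[j]?
  have key : ∀ j, (π₁ ++ π₂.tail)[v₁.length + j]? = π₂[j]? := by
    intro j
    cases j with
    | zero =>
      rw [List.getElem?_append, if_pos (by omega), Nat.add_zero, hg₁, hh₂]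
    | succ k =>
      rw [List.getElem?_append, if_neg (by omega)]
      have : v₁.length + (k+1) - π₁.length = k := by omega
      rw [this]
      rw [List.getElem?_tail]
  have low : ∀ j, j ≤ v₁.length → (π₁ ++ π₂.tail)[j]? = π₁[j]? := by
    intro j hj
    rw [List.getElem?_append, if_pos (by omega)]
  refine ⟨?_, ?_, ?_, ?_⟩
  · simp [hl₁, hl₂]
    omega
  · rw [low 0 (by omega)]; exact hh₁
  · have : (v₁ ++ v₂).length = v₁.length + v₂.length := by simp
    rw [this, key v₂.length]; exact hg₂
  · intro i a s t hv hs ht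
    have hi : i < v₁.length + v₂.length := by
      have := (List.getElem?_eq_some_iff.mp hv).1
      simpa using this
    by_cases hcase : i < v₁.length
    · rw [List.getElem?_append, if_pos hcase] at hv
      rw [low i (by omega)] at hs
      rw [low (i+1) (by omega)] at ht
      exact ht₁ i a s t hv hs ht
    · obtain ⟨j, rfl⟩ : ∃ j, i = v₁.length + j := ⟨i - v₁.length, by omega⟩
      rw [List.getElem?_append, if_neg hcase] at hv
      have hj : v₁.length + j - v₁.length = j := by omega
      rw [hj] at hv
      rw [key j] at hs
      have : v₁.length + j + 1 = v₁.length + (j+1) := by omega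
      rw [this, key (j+1)] at ht
      exact ht₂ j a s t hv hs ht

lemma isPath_take {Q A : Type} {δ : Q → A → Q → Prop} {π : List Q} {v : List A} {p q s : Q}
    (h : IsPath δ π v p q) {i : ℕ} (hi : i ≤ v.length) (hs : π[i]? = some s) :
    IsPath δ (π.take (i+1)) (v.take i) p s := by
  rw [isPath_iff] at h ⊢
  obtain ⟨hl, hh, hg, ht⟩ := h
  have hlen : (π.take (i+1)).length = i + 1 := by simp [hl]; omega
  have hvlen : (v.take i).length = i := by simp; omega
  refine ⟨by rw [hlen, hvlen], ?_, ?_, ?_⟩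
  · rw [List.getElem?_take, if_pos (by omega)]; exact hh
  · rw [hvlen, List.getElem?_take, if_pos (by omega)]; exact hs
  · intro j a s' t hv hs' ht'
    have hj : j < i := by
      have := (List.getElem?_eq_some_iff.mp hv).1
      omega
    rw [List.getElem?_take, if_pos (by omega)] at hv
    rw [List.getElem?_take, if_pos (by omega)] at hs'
    rw [List.getElem?_take, if_pos (by omega)] at ht'
    exact ht j a s' t hv hs' ht'

lemma isPath_drop {Q A : Type} {δ : Q → A → Q → Prop} {π : List Q} {v : List A} {p q s : Q}
    (h : IsPath δ π v p q) {i : ℕ} (hi : i ≤ v.length) (hs : π[i]? = some s) :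
    IsPath δ (π.drop i) (v.drop i) s q := by
  rw [isPath_iff] at h ⊢
  obtain ⟨hl, hh, hg, ht⟩ := h
  refine ⟨by simp [hl]; omega, ?_, ?_, ?_⟩
  · rw [List.getElem?_drop]; simpa using hs
  · rw [List.getElem?_drop]
    have : (v.drop i).length = v.length - i := by simp
    rw [this]
    have : i + (v.length - i) = v.length := by omega
    rw [this]; exact hg
  · intro j a s' t hv hs' ht'
    rw [List.getElem?_drop] at hv hs' ht'
    rw [← Nat.add_assoc] at ht'
    exact ht (i+j) a s' t hv hs' ht'

theorem eda_implies_ida {Q A : Type} (M : NAuto Q A) (h : EDA M) : IDA M := by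
  obtain ⟨p, v, π₁, π₂, hne, h₁, h₂⟩ := h
  have hl₁ : π₁.length = v.length + 1 := h₁.1
  have hl₂ : π₂.length = v.length + 1 := h₂.1
  -- find a differing index
  have : ∃ i : ℕ, π₁[i]? ≠ π₂[i]? := by
    by_contra hc
    push_neg at hc
    exact hne (List.ext_getElem? hc)
  obtain ⟨i, hdiff⟩ := this
  have hi : i < π₁.length := by
    by_contra hge
    push_neg at hge
    apply hdiff
    rw [List.getElem?_eq_none hge, List.getElem?_eq_none (by omega)]
  have hiv : i ≤ v.length := by omega
  obtain ⟨s, hs⟩ : ∃ s, π₁[i]? = some s := ⟨π₁[i]'hi, List.getElem?_eq_some_iff.mpr ⟨hi, rfl⟩⟩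
  obtain ⟨t, hts⟩ : ∃ t, π₂[i]? = some t := ⟨π₂[i]'(by omega), List.getElem?_eq_some_iff.mpr ⟨by omega, rfl⟩⟩
  have hst : s ≠ t := by
    intro e; apply hdiff; rw [hs, hts, e]
  refine ⟨s, t, hst, v.drop i ++ v.take i, ?_⟩
  have A₁ := isPath_take h₁ hiv hs
  have B₁ := isPath_drop h₁ hiv hs
  have A₂ := isPath_take h₂ hiv hts
  have B₂ := isPath_drop h₂ hiv hts
  exact ⟨_, _, _, isPath_append B₁ A₁, isPath_append B₁ A₂, isPath_append B₂ A₂⟩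
end

section
/- If an automaton A does not satisfy EDA_F, then for every accepting state q ∈ F and every infinite word w, the number of infinite paths of A starting at q, labelled by w, that visit q infinitely often is at most |Q|. -/
open Classical in
lemma isPath_ofFn {Q A : Type} (δ : Q → A → Q → Prop) (ρ : ℕ → Q) (w : ℕ → A) (N : ℕ)
    (hδ : ∀ i, δ (ρ i) (w i) (ρ (i+1))) :
    IsPath δ (List.ofFn (fun i : Fin (N+1) => ρ i)) (List.ofFn (fun i : Fin N => w i))
      (ρ 0) (ρ N) := by
  refine ⟨by simp, ?_, ?_, ?_⟩
  · simp [List.ofFn_succ]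
  · rw [List.getLast?_eq_getElem?, List.getElem?_ofFn]
    simp
  · intro i a s t hv hπ hπ'
    simp only [List.getElem?_ofFn] at hv hπ hπ'
    by_cases hiN : i < N
    · simp [hiN, show i < N + 1 by omega] at hv hπ hπ'
      subst hv hπ hπ'
      exact hδ i
    · simp [hiN] at hv

lemma neq_propagates {Q A : Type} (M : NAuto Q A) (h : ¬ EDAF M) (q : Q) (hq : q ∈ M.F)
    (w : ℕ → A) (ρ₁ ρ₂ : ℕ → Q)
    (h1 : ρ₁ 0 = q) (t1 : ∀ i, M.Δ (ρ₁ i) (w i) (ρ₁ (i+1)))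
    (h2 : ρ₂ 0 = q) (t2 : ∀ i, M.Δ (ρ₂ i) (w i) (ρ₂ (i+1))) (v2 : ∀ n, ∃ m ≥ n, ρ₂ m = q)
    (d m : ℕ) (hdm : d ≤ m) (hd : ρ₁ d ≠ ρ₂ d) : ρ₁ m ≠ ρ₂ m := by
  intro hm
  obtain ⟨N, hN, hNq⟩ := v2 (m+1)
  set ρ' : ℕ → Q := fun k => if k ≤ m then ρ₁ k else ρ₂ k with hρ'
  have t' : ∀ i, M.Δ (ρ' i) (w i) (ρ' (i+1)) := by
    intro i
    simp only [hρ']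
    split_ifs with ha hb
    · exact t1 i
    · have hieq : i = m := by omega
      subst hieq
      rw [hm]
      exact t2 i
    · omega
    · exact t2 i
  apply h
  refine ⟨q, hq, List.ofFn (fun i : Fin N => w i),
    List.ofFn (fun i : Fin (N+1) => ρ' i), List.ofFn (fun i : Fin (N+1) => ρ₂ i), ?_, ?_, ?_⟩
  · intro he
    rw [List.ofFn_inj] at he
    have := congrFun he ⟨d, by omega⟩
    simp only [hρ', if_pos hdm] at this
    exact hd this
  · have := isPath_ofFn M.Δ ρ' w N t'
    have e0 : ρ' 0 = q := by simp [hρ', h1]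
    have eN : ρ' N = q := by simp only [hρ', if_neg (by omega : ¬ N ≤ m)]; exact hNq
    rwa [e0, eN] at this
  · have := isPath_ofFn M.Δ ρ₂ w N t2
    rwa [h2, hNq] at this

theorem not_edaF_bounded_paths {Q A : Type} [Fintype Q] (M : NAuto Q A) (h : ¬ EDAF M)
    (q : Q) (hq : q ∈ M.F) (w : ℕ → A) :
    {ρ : ℕ → Q | ρ 0 = q ∧ (∀ i, M.Δ (ρ i) (w i) (ρ (i+1))) ∧ ∀ n, ∃ m ≥ n, ρ m = q}.Finite ∧
    Nat.card {ρ : ℕ → Q | ρ 0 = q ∧ (∀ i, M.Δ (ρ i) (w i) (ρ (i+1))) ∧ ∀ n, ∃ m ≥ n, ρ m = q}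
      ≤ Fintype.card Q := by
  classical
  set S := {ρ : ℕ → Q | ρ 0 = q ∧ (∀ i, M.Δ (ρ i) (w i) (ρ (i+1))) ∧ ∀ n, ∃ m ≥ n, ρ m = q}
    with hS
  have key : ∀ t : Finset (ℕ → Q), ↑t ⊆ S → t.card ≤ Fintype.card Q := by
    intro t ht
    have hfind : ∀ ρ₁ ρ₂ : ℕ → Q, ρ₁ ≠ ρ₂ → ∃ d, ρ₁ d ≠ ρ₂ d := fun _ _ hne =>
      Function.ne_iff.mp hne
    set D : (ℕ → Q) → (ℕ → Q) → ℕ := fun ρ₁ ρ₂ =>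
      if hne : ρ₁ = ρ₂ then 0 else (hfind ρ₁ ρ₂ hne).choose with hD
    set m : ℕ := t.sup (fun ρ₁ => t.sup (fun ρ₂ => D ρ₁ ρ₂)) with hmdef
    have hinj : Set.InjOn (fun ρ : ℕ → Q => ρ m) ↑t := by
      intro ρ₁ h₁ ρ₂ h₂ he
      by_contra hne
      have hd : ρ₁ (D ρ₁ ρ₂) ≠ ρ₂ (D ρ₁ ρ₂) := by
        simp only [hD, dif_neg hne]
        exact (hfind ρ₁ ρ₂ hne).choose_spec
      have hdm : D ρ₁ ρ₂ ≤ m := le_trans (Finset.le_sup (f := fun ρ₂ => D ρ₁ ρ₂) h₂)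
        (Finset.le_sup (f := fun ρ₁ => t.sup (fun ρ₂ => D ρ₁ ρ₂)) h₁)
      obtain ⟨e1, u1, v1⟩ := ht h₁
      obtain ⟨e2, u2, v2⟩ := ht h₂
      exact neq_propagates M h q hq w ρ₁ ρ₂ e1 u1 e2 u2 v2 _ m hdm hd he
    calc t.card ≤ Finset.univ.card :=
          Finset.card_le_card_of_injOn (fun ρ => ρ m) (fun _ _ => Finset.mem_univ _) hinj
      _ = Fintype.card Q := Finset.card_univ
  have hfin : S.Finite := by
    by_contra hinf
    obtain ⟨t, hts, htc⟩ := Set.Infinite.exists_subset_card_eq hinf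
      (Fintype.card Q + 1)
    have := key t hts
    omega
  refine ⟨hfin, ?_⟩
  rw [Nat.card_coe_set_eq, Set.ncard_eq_toFinset_card S hfin]
  exact key _ (by simp)
end

section
/- If A satisfies EDA_F, then there exists an infinite word w such that the set of accepting Büchi runs of A on w has cardinality 2^ℵ₀ (is uncountable); in particular, for an EDA_F pattern (p, v, π₁, π₂) with p ∈ F reachable from an initial state via a word u, the word u v^ω has uncountably many accepting runs. -/
/-! ### Auxiliary lemmas -/

lemma aux_get?_eq_some_getD {α : Type} (l : List α) (n : ℕ) (d : α) (h : n < l.length) :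
    l[n]? = some (l.getD n d) := by
  rw [List.getD_eq_getElem?_getD, List.getElem?_eq_getElem h]; rfl

lemma aux_getD_zero {α : Type} (l : List α) (p : α) (h : l.head? = some p) (d : α) :
    l.getD 0 d = p := by
  rw [List.getD_eq_getElem?_getD, ← List.head?_eq_getElem?, h]; rfl

lemma aux_getD_last {α : Type} (l : List α) (q : α) (h : l.getLast? = some q) (k : ℕ) (d : α)
    (hk : l.length = k + 1) : l.getD k d = q := by
  rw [List.getD_eq_getElem?_getD, show k = l.length - 1 by omega, ← List.getLast?_eq_getElem?, h]
  rfl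

lemma IsPath.getD_zero {Q A : Type} {δ : Q → A → Q → Prop} {π : List Q} {v : List A} {p q : Q}
    (h : IsPath δ π v p q) (d : Q) : π.getD 0 d = p :=
  aux_getD_zero π p h.2.1 d

lemma IsPath.getD_last {Q A : Type} {δ : Q → A → Q → Prop} {π : List Q} {v : List A} {p q : Q}
    (h : IsPath δ π v p q) (d : Q) : π.getD v.length d = q :=
  aux_getD_last π q h.2.2.1 v.length d h.1

lemma IsPath.step {Q A : Type} [Inhabited A] {δ : Q → A → Q → Prop} {π : List Q} {v : List A}
    {p q : Q} (h : IsPath δ π v p q) (i : ℕ) (hi : i < v.length) (d : Q) :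
    δ (π.getD i d) (v.getD i default) (π.getD (i+1) d) := by
  have hlen := h.1
  exact h.2.2.2 i _ _ _ (aux_get?_eq_some_getD v i default hi)
    (aux_get?_eq_some_getD π i d (by omega)) (aux_get?_eq_some_getD π (i+1) d (by omega))

lemma IsPath.nil_loop {Q A : Type} {δ : Q → A → Q → Prop} {π : List Q} {p q : Q}
    (h : IsPath δ π [] p q) : π = [p] := by
  obtain ⟨a, ha⟩ := List.length_eq_one_iff.mp h.1
  have := h.2.1
  subst ha
  simp_all

/-- The run determined by the prefix path `π₀` and the choice function `f` selecting
at each round either loop `π₁` or `π₂`. -/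
def edaRun {Q : Type} (π₀ π₁ π₂ : List Q) (p : Q) (U L : ℕ) (f : ℕ → Bool) (n : ℕ) : Q :=
  if n < U then π₀.getD n p
  else (if f ((n - U) / L) then π₁ else π₂).getD ((n - U) % L) p

theorem edaF_uncountable {Q A : Type} [Fintype Q] [Inhabited A] (M : NAuto Q A)
    (p : Q) (hp : p ∈ M.F) (v : List A) (π₁ π₂ : List Q) (hne : π₁ ≠ π₂)
    (h1 : IsPath M.Δ π₁ v p p) (h2 : IsPath M.Δ π₂ v p p)
    (u : List A) (q0 : Q) (hq0 : q0 ∈ M.Q0) (π₀ : List Q) (h0 : IsPath M.Δ π₀ u q0 p) :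
    (∃ w : ℕ → A, Cardinal.mk (BuchiRuns M w) = Cardinal.continuum) ∧
    Cardinal.mk (BuchiRuns M (uvWord u v)) = Cardinal.continuum := by
  set U := u.length with hU
  set L := v.length with hLdef
  -- the loop word is nonempty
  have hL : 0 < L := by
    rcases Nat.eq_zero_or_pos L with h | h
    · exfalso
      have hv : v = [] := List.length_eq_zero_iff.mp h
      subst hv
      exact hne (h1.nil_loop.trans h2.nil_loop.symm)
    · exact h
  set pick : Bool → List Q := fun b => if b then π₁ else π₂ with hpickdef
  have hpick : ∀ b, IsPath M.Δ (pick b) v p p := by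
    intro b; cases b <;> simpa [pick] using (by assumption)
  set ρ : (ℕ → Bool) → ℕ → Q := fun f => edaRun π₀ π₁ π₂ p U L f with hρ
  have rho_ge : ∀ f m, ρ f (U + m) = (pick (f (m / L))).getD (m % L) p := by
    intro f m
    have h1 : ¬ (U + m < U) := by omega
    have h2 : U + m - U = m := by omega
    simp only [hρ, edaRun, h1, if_false, h2, hpickdef]
  have rho_le : ∀ f n, n ≤ U → ρ f n = π₀.getD n p := by
    intro f n hn
    rcases lt_or_eq_of_le hn with h | h
    · simp only [hρ, edaRun, h, if_true]
    · subst h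
      have := rho_ge f 0
      simp only [Nat.add_zero] at this
      rw [this, Nat.zero_div, Nat.zero_mod, (hpick _).getD_zero, h0.getD_last]
  have w_lt : ∀ i, i < U → uvWord u v i = u.getD i default := by
    intro i hi; simp only [uvWord, ← hU, hi, if_true]
  have w_ge : ∀ m, uvWord u v (U + m) = v.getD (m % L) default := by
    intro m
    have h1 : ¬ (U + m < U) := by omega
    have h2 : U + m - U = m := by omega
    simp only [uvWord, ← hU, ← hLdef, h1, if_false, h2]
  -- successor evaluation inside the loop region
  have rho_succ : ∀ f m, ρ f (U + m + 1) = (pick (f (m / L))).getD (m % L + 1) p := by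
    intro f m
    have key := Nat.div_add_mod m L
    set k := m / L with hk
    set r := m % L with hr
    have hrL : r < L := Nat.mod_lt _ hL
    have heq : U + m + 1 = U + (m + 1) := by omega
    rw [heq, rho_ge]
    rcases Nat.lt_or_ge (r + 1) L with hlt | hge
    · -- r + 1 < L : stay in the same block
      have hm1 : m + 1 = L * k + (r + 1) := by omega
      have e1 : (m + 1) / L = k := by
        rw [hm1, Nat.mul_add_div hL, Nat.div_eq_of_lt hlt, Nat.add_zero]
      have e2 : (m + 1) % L = r + 1 := by
        rw [hm1, Nat.mul_add_mod, Nat.mod_eq_of_lt hlt]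
      rw [e1, e2]
    · -- r + 1 = L : move to the next block, landing on p
      have hEq : r + 1 = L := by omega
      have hm1 : m + 1 = L * k + L := by omega
      have e1 : (m + 1) / L = k + 1 := by
        rw [hm1, show L * k + L = L * (k + 1) by ring, Nat.mul_div_cancel_left _ hL]
      have e2 : (m + 1) % L = 0 := by
        rw [hm1, show L * k + L = L * (k + 1) by ring, Nat.mul_mod_right]
      rw [e1, e2, (hpick _).getD_zero, hEq]
      exact ((hpick _).getD_last p).symm
  -- each ρ f is an accepting run
  have hmem : ∀ f, ρ f ∈ BuchiRuns M (uvWord u v) := by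
    intro f
    refine ⟨?_, ?_, ?_⟩
    · rw [rho_le f 0 (Nat.zero_le _), h0.getD_zero]
      exact hq0
    · intro i
      rcases Nat.lt_or_ge i U with hi | hi
      · rw [rho_le f i hi.le, rho_le f (i+1) (by omega), w_lt i hi]
        exact h0.step i hi p
      · obtain ⟨m, rfl⟩ : ∃ m, i = U + m := ⟨i - U, by omega⟩
        rw [rho_ge, rho_succ, w_ge]
        exact (hpick _).step (m % L) (Nat.mod_lt _ hL) p
    · intro n
      refine ⟨U + n * L, ?_, ?_⟩
      · have : n ≤ n * L := Nat.le_mul_of_pos_right n hL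
        omega
      · rw [rho_ge, Nat.mul_mod_left, (hpick _).getD_zero]
        exact hp
  -- injectivity of f ↦ ρ f
  have hinj : Function.Injective fun f : ℕ → Bool =>
      (⟨ρ f, hmem f⟩ : BuchiRuns M (uvWord u v)) := by
    intro f g hfg
    have hfg' : ρ f = ρ g := congrArg Subtype.val hfg
    funext k
    by_contra hk
    have hpp : pick (f k) = pick (g k) := by
      -- show the two loop lists coincide, contradiction with hne
      apply List.ext_getElem?
      intro n
      have hlen1 : (pick (f k)).length = L + 1 := (hpick (f k)).1
      have hlen2 : (pick (g k)).length = L + 1 := (hpick (g k)).1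
      rcases Nat.lt_or_ge n L with hn | hn
      · have e1 : (n + k * L) / L = k := by
          rw [Nat.add_mul_div_right _ _ hL, Nat.div_eq_of_lt hn, Nat.zero_add]
        have e2 : (n + k * L) % L = n := by
          rw [Nat.add_mul_mod_self_right, Nat.mod_eq_of_lt hn]
        have := congrFun hfg' (U + (n + k * L))
        rw [rho_ge, rho_ge, e1, e2] at this
        rw [aux_get?_eq_some_getD _ n p (by omega), aux_get?_eq_some_getD _ n p (by omega), this]
      · by_cases hEq : n = L
        · subst hEq
          rw [aux_get?_eq_some_getD _ _ p (by omega), aux_get?_eq_some_getD _ _ p (by omega),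
            (hpick (f k)).getD_last, (hpick (g k)).getD_last]
        · rw [List.getElem?_eq_none (by omega), List.getElem?_eq_none (by omega)]
    cases hf : f k <;> cases hg : g k <;> simp [pick, hf, hg] at hpp <;> simp_all
  -- cardinality computations
  have lower : Cardinal.continuum ≤ Cardinal.mk (BuchiRuns M (uvWord u v)) := by
    have := Cardinal.mk_le_of_injective hinj
    rwa [show Cardinal.mk (ℕ → Bool) = Cardinal.continuum by
      rw [← Cardinal.power_def, Cardinal.mk_nat, Cardinal.mk_bool, Cardinal.two_power_aleph0]]
      at this
  have upper : Cardinal.mk (BuchiRuns M (uvWord u v)) ≤ Cardinal.continuum := by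
    refine (Cardinal.mk_set_le _).trans ?_
    rw [← Cardinal.power_def]
    calc Cardinal.mk Q ^ Cardinal.mk ℕ
        ≤ Cardinal.continuum ^ Cardinal.mk ℕ :=
          Cardinal.power_le_power_right
            ((Cardinal.lt_aleph0_of_finite Q).le.trans Cardinal.aleph0_le_continuum)
      _ = Cardinal.continuum := by rw [Cardinal.mk_nat, Cardinal.continuum_power_aleph0]
  have hmain : Cardinal.mk (BuchiRuns M (uvWord u v)) = Cardinal.continuum :=
    le_antisymm upper lower
  exact ⟨⟨uvWord u v, hmain⟩, hmain⟩
end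

section
/- If A satisfies IDA_F and the state p of the IDA_F pattern is reachable from an initial state, then there exists an ultimately periodic word u v^ω on which A has infinitely many (at least ℵ₀) distinct accepting Büchi runs. -/
lemma pathFacts {Q A : Type} {δ : Q → A → Q → Prop} {π : List Q} {v : List A} {s t : Q}
    (h : IsPath δ π v s t) (d : Q) (da : A) :
    π.getD 0 d = s ∧ π.getD v.length d = t ∧
      ∀ r < v.length, δ (π.getD r d) (v.getD r da) (π.getD (r+1) d) := by
  obtain ⟨hlen, hh, hl, hs⟩ := h
  have hget : ∀ n, n < π.length → π[n]? = some (π.getD n d) := by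
    intro n hn
    simp [List.getD, List.getElem?_eq_getElem hn]
  have hvget : ∀ n, n < v.length → v[n]? = some (v.getD n da) := by
    intro n hn
    simp [List.getD, List.getElem?_eq_getElem hn]
  have h0 : π.getD 0 d = s := by
    have : π[0]? = some s := by cases π <;> simp_all
    have h2 := hget 0 (by omega)
    rw [this] at h2; exact (Option.some_inj.mp h2).symm
  have hlast : π.getD v.length d = t := by
    rw [List.getLast?_eq_getElem?] at hl
    have : π[v.length]? = some t := by
      simpa [hlen] using hl
    have h2 := hget v.length (by omega)
    rw [this] at h2; exact (Option.some_inj.mp h2).symm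
  refine ⟨h0, hlast, fun r hr => ?_⟩
  exact hs r _ _ _ (hvget r hr) (hget r (by omega)) (hget (r+1) (by omega))

def blkOf {Q : Type} (π₁ π₂ π₃ : List Q) (k j : ℕ) : List Q :=
  if j < k then π₁ else if j = k then π₂ else π₃

def theRun {Q : Type} (p q : Q) (π₀ π₁ π₂ π₃ : List Q) (U L k i : ℕ) : Q :=
  if i < U then π₀.getD i p
  else (blkOf π₁ π₂ π₃ k ((i - U) / L)).getD ((i - U) % L) q

theorem idaF_countably_many_runs {Q A : Type} [Inhabited A] (M : NAuto Q A)
    (p q : Q) (hpq : p ≠ q) (hq : q ∈ M.F) (v : List A) (π₁ π₂ π₃ : List Q)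
    (h1 : IsPath M.Δ π₁ v p p) (h2 : IsPath M.Δ π₂ v p q) (h3 : IsPath M.Δ π₃ v q q)
    (u : List A) (q0 : Q) (hq0 : q0 ∈ M.Q0) (π₀ : List Q) (h0 : IsPath M.Δ π₀ u q0 p) :
    Cardinal.aleph0 ≤ Cardinal.mk (BuchiRuns M (uvWord u v)) := by
  set U := u.length with hU
  set L := v.length with hLdef
  obtain ⟨f0h, f0l, f0s⟩ := pathFacts h0 p (default : A)
  obtain ⟨f1h, f1l, f1s⟩ := pathFacts h1 q (default : A)
  obtain ⟨f2h, f2l, f2s⟩ := pathFacts h2 q (default : A)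
  obtain ⟨f3h, f3l, f3s⟩ := pathFacts h3 q (default : A)
  have hL : 0 < L := by
    by_contra h
    have hv : v.length = 0 := by omega
    rw [hv] at f2l
    exact hpq (f2h.symm.trans f2l)
  set B := blkOf π₁ π₂ π₃ with hB
  have hBhead : ∀ k j, (B k j).getD 0 q = if j ≤ k then p else q := by
    intro k j
    simp only [hB, blkOf]
    split_ifs <;> first
      | exact f1h | exact f2h | exact f3h | omega
  have hBlast : ∀ k j, (B k j).getD L q = if j < k then p else q := by
    intro k j
    simp only [hB, blkOf]
    split_ifs <;> first
      | exact f1l | exact f2l | exact f3l | omega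
  have hBstep : ∀ k j r, r < L →
      M.Δ ((B k j).getD r q) (v.getD r default) ((B k j).getD (r+1) q) := by
    intro k j r hr
    simp only [hB, blkOf]
    split_ifs
    · exact f1s r hr
    · exact f2s r hr
    · exact f3s r hr
  set ρ : ℕ → ℕ → Q := fun k => theRun p q π₀ π₁ π₂ π₃ U L k with hρ
  have hwval : ∀ i, U ≤ i → uvWord u v i = v.getD ((i - U) % L) default := by
    intro i hi
    have hiu : ¬ i < u.length := by omega
    simp only [uvWord, if_neg hiu]
    rfl
  have hEval : ∀ k j, ρ k (U + j * L) = if j ≤ k then p else q := by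
    intro k j
    simp only [hρ, theRun]
    rw [if_neg (by omega)]
    have hm : U + j * L - U = j * L := by omega
    rw [hm, Nat.mul_div_cancel _ hL, Nat.mul_mod_left]
    exact hBhead k j
  have hρ0 : ∀ k, ρ k 0 = q0 := by
    intro k
    rcases Nat.eq_zero_or_pos U with hU0 | hU0
    · have e := hEval k 0
      rw [if_pos (Nat.zero_le k)] at e
      have h00 : ρ k 0 = p := by simpa [hU0] using e
      have hu0 : u.length = 0 := by omega
      rw [hu0] at f0l
      rw [h00]
      exact (f0h.symm.trans f0l).symm
    · simp only [hρ, theRun, if_pos hU0]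
      exact f0h
  have hmem : ∀ k, ρ k ∈ BuchiRuns M (uvWord u v) := by
    intro k
    refine ⟨by rw [hρ0 k]; exact hq0, ?_, ?_⟩
    · intro i
      by_cases hi : i < U
      · have hw : uvWord u v i = u.getD i default := by
          simp only [uvWord, if_pos (show i < u.length by omega)]
        have hρi : ρ k i = π₀.getD i p := by simp only [hρ, theRun, if_pos hi]
        have hρi1 : ρ k (i+1) = π₀.getD (i+1) p := by
          by_cases hi1 : i + 1 < U
          · simp only [hρ, theRun, if_pos hi1]
          · have hiU : i + 1 = U := by omega
            have e := hEval k 0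
            rw [if_pos (Nat.zero_le k)] at e
            simp only [Nat.zero_mul, Nat.add_zero] at e
            rw [hiU, e]
            exact f0l.symm
        rw [hw, hρi, hρi1]
        exact f0s i (by omega)
      · push_neg at hi
        set m := i - U with hm
        set j := m / L with hj
        set r := m % L with hr
        have hrL : r < L := Nat.mod_lt _ hL
        have hmjr : m = L * j + r := (Nat.div_add_mod m L).symm
        have hw : uvWord u v i = v.getD r default := hwval i hi
        have hρi : ρ k i = (B k j).getD r q := by
          simp only [hρ, theRun, if_neg (show ¬ i < U by omega), ← hm, ← hj, ← hr, hB]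
        by_cases hr1 : r + 1 < L
        · have hρi1 : ρ k (i+1) = (B k j).getD (r+1) q := by
            simp only [hρ, theRun, if_neg (show ¬ i + 1 < U by omega)]
            have h1' : i + 1 - U = L * j + (r + 1) := by omega
            rw [h1', Nat.mul_add_div hL, Nat.mul_add_mod,
              Nat.div_eq_of_lt hr1, Nat.mod_eq_of_lt hr1, Nat.add_zero]
          rw [hw, hρi, hρi1]
          exact hBstep k j r hrL
        · have hrL1 : r + 1 = L := by omega
          have hρi1 : ρ k (i+1) = (B k j).getD (r+1) q := by
            simp only [hρ, theRun, if_neg (show ¬ i + 1 < U by omega)]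
            have hLL : L * (j + 1) = L * j + L := by ring
            have h1' : i + 1 - U = L * (j + 1) := by omega
            rw [h1', Nat.mul_div_cancel_left _ hL, Nat.mul_mod_right]
            rw [hBhead k (j+1), hrL1, hBlast k j]
            by_cases hjk : j + 1 ≤ k
            · rw [if_pos hjk, if_pos (show j < k by omega)]
            · rw [if_neg hjk, if_neg (show ¬ j < k by omega)]
          rw [hw, hρi, hρi1]
          exact hBstep k j r hrL
    · intro n
      refine ⟨U + (k + n + 1) * L, by nlinarith, ?_⟩
      rw [hEval k (k + n + 1), if_neg (by omega)]
      exact hq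
  have hinj : Function.Injective (fun k => (⟨ρ k, hmem k⟩ : BuchiRuns M (uvWord u v))) := by
    intro k k' hkk
    simp only [Subtype.mk.injEq] at hkk
    by_contra hne
    rcases Nat.lt_or_ge k k' with hlt | hge
    · have e1 := hEval k (k+1)
      rw [if_neg (by omega)] at e1
      have e2 := hEval k' (k+1)
      rw [if_pos (by omega)] at e2
      rw [hkk] at e1
      exact hpq (e2.symm.trans e1)
    · have hlt : k' < k := by omega
      have e1 := hEval k (k'+1)
      rw [if_pos (by omega)] at e1
      have e2 := hEval k' (k'+1)
      rw [if_neg (by omega)] at e2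
      rw [hkk] at e1
      exact hpq (e1.symm.trans e2)
  have : Infinite (BuchiRuns M (uvWord u v)) := Infinite.of_injective _ hinj
  exact Cardinal.infinite_iff.mp this
end

section
/- Pattern shifting for EDA: if A has an EDA pattern (p, v, π₁, π₂) such that π₁ or π₂ visits some accepting state, then A satisfies EDA_F, i.e., there is an EDA pattern (p', v', π'₁, π'₂) with p' ∈ F. -/
lemma head?_cons_tail {Q : Type} {π : List Q} {p : Q} (h : π[0]? = some p) :
    π = p :: π.tail := by
  cases π with
  | nil => simp at h
  | cons a t => simp at h; rw [h]; rfl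

lemma path_concat {Q A : Type} {δ : Q → A → Q → Prop} {π σ : List Q} {v w : List A} {p q r : Q}
    (h1 : IsPath δ π v p q) (h2 : IsPath δ σ w q r) :
    IsPath δ (π ++ σ.tail) (v ++ w) p r := by
  rw [isPath_iff] at h1 h2 ⊢
  obtain ⟨l1, hh1, ht1, hd1⟩ := h1
  obtain ⟨l2, hh2, ht2, hd2⟩ := h2
  have hσ : σ = q :: σ.tail := head?_cons_tail hh2
  have key1 : ∀ i, i ≤ v.length → (π ++ σ.tail)[i]? = π[i]? := by
    intro i hi
    rw [List.getElem?_append]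
    rw [if_pos (by omega)]
  have key2 : ∀ i, v.length ≤ i → (π ++ σ.tail)[i]? = σ[i - v.length]? := by
    intro i hi
    rcases Nat.eq_or_lt_of_le hi with h | h
    · rw [key1 i (le_of_eq h.symm), ← h, Nat.sub_self, ht1]
      conv_rhs => rw [hσ]
      simp
    · rw [List.getElem?_append_right (by omega)]
      conv_rhs => rw [hσ]
      rw [l1]
      have : i - v.length = (i - (v.length + 1)) + 1 := by omega
      rw [this]
      simp
  refine ⟨?_, ?_, ?_, ?_⟩
  · simp only [List.length_append, List.length_tail, l1, l2]; omega
  · rw [key1 0 (Nat.zero_le _)]; exact hh1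
  · simp only [List.length_append]
    rw [key2 (v.length + w.length) (by omega)]
    have : v.length + w.length - v.length = w.length := by omega
    rw [this]; exact ht2
  · intro i a s t ha hs ht
    have hi : i < v.length + w.length := by
      obtain ⟨h, _⟩ := List.getElem?_eq_some_iff.mp ha
      simpa using h
    rcases Nat.lt_or_ge i v.length with h | h
    · rw [List.getElem?_append, if_pos (by simpa using h)] at ha
      rw [key1 i (le_of_lt h)] at hs
      rw [key1 (i+1) (by omega)] at ht
      exact hd1 i a s t ha hs ht
    · rw [List.getElem?_append_right (by simpa using h)] at ha
      rw [key2 i h] at hs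
      rw [key2 (i+1) (by omega)] at ht
      have e : i + 1 - v.length = (i - v.length) + 1 := by omega
      rw [e] at ht
      exact hd2 (i - v.length) a s t ha hs ht

lemma path_take {Q A : Type} {δ : Q → A → Q → Prop} {π : List Q} {v : List A} {p q q' : Q}
    (h : IsPath δ π v p q) (k : ℕ) (hk : k ≤ v.length) (hq : π[k]? = some q') :
    IsPath δ (π.take (k+1)) (v.take k) p q' := by
  rw [isPath_iff] at h ⊢
  obtain ⟨l1, hh1, ht1, hd1⟩ := h
  have lt : (List.take (k+1) π).length = k + 1 := by
    rw [List.length_take, l1]; omega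
  have lv : (List.take k v).length = k := by
    rw [List.length_take]; omega
  refine ⟨by rw [lt, lv], ?_, ?_, ?_⟩
  · rw [List.getElem?_take, if_pos (by omega)]; exact hh1
  · rw [lv, List.getElem?_take, if_pos (by omega)]; exact hq
  · intro i a s t ha hs ht
    have hi : i < k := by
      obtain ⟨h, _⟩ := List.getElem?_eq_some_iff.mp ha
      rw [lv] at h; exact h
    rw [List.getElem?_take, if_pos hi] at ha
    rw [List.getElem?_take, if_pos (by omega)] at hs
    rw [List.getElem?_take, if_pos (by omega)] at ht
    exact hd1 i a s t ha hs ht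

lemma path_drop {Q A : Type} {δ : Q → A → Q → Prop} {π : List Q} {v : List A} {p q q' : Q}
    (h : IsPath δ π v p q) (k : ℕ) (hk : k ≤ v.length) (hq : π[k]? = some q') :
    IsPath δ (π.drop k) (v.drop k) q' q := by
  rw [isPath_iff] at h ⊢
  obtain ⟨l1, hh1, ht1, hd1⟩ := h
  have lt : (List.drop k π).length = (v.length - k) + 1 := by
    rw [List.length_drop, l1]; omega
  have lv : (List.drop k v).length = v.length - k := by
    rw [List.length_drop]
  refine ⟨by rw [lt, lv], ?_, ?_, ?_⟩
  · rw [List.getElem?_drop]; simpa using hq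
  · rw [lv, List.getElem?_drop]
    have : k + (v.length - k) = v.length := by omega
    rw [this]; exact ht1
  · intro i a s t ha hs ht
    rw [List.getElem?_drop] at ha hs ht
    have e : k + (i + 1) = (k + i) + 1 := by omega
    rw [e] at ht
    exact hd1 (k + i) a s t ha hs ht

lemma eda_shift_aux {Q A : Type} (M : NAuto Q A)
    (p : Q) (v : List A) (π₁ π₂ : List Q) (hne : π₁ ≠ π₂)
    (h1 : IsPath M.Δ π₁ v p p) (h2 : IsPath M.Δ π₂ v p p)
    (q' : Q) (hq' : q' ∈ M.F) (hmem : q' ∈ π₁) :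
    EDAF M := by
  obtain ⟨⟨k, hklt⟩, hget⟩ := List.get_of_mem hmem
  have hq : π₁[k]? = some q' := List.getElem?_eq_some_iff.mpr ⟨hklt, hget⟩
  have hlen : π₁.length = v.length + 1 := h1.1
  have hk : k ≤ v.length := by omega
  have hT : IsPath M.Δ (π₁.take (k+1)) (v.take k) p q' := path_take h1 k hk hq
  have hD : IsPath M.Δ (π₁.drop k) (v.drop k) q' p := path_drop h1 k hk hq
  have hL1 : IsPath M.Δ ((π₁.drop k ++ π₁.tail) ++ (π₁.take (k+1)).tail)
      ((v.drop k ++ v) ++ v.take k) q' q' := path_concat (path_concat hD h1) hT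
  have hL2 : IsPath M.Δ ((π₁.drop k ++ π₂.tail) ++ (π₁.take (k+1)).tail)
      ((v.drop k ++ v) ++ v.take k) q' q' := path_concat (path_concat hD h2) hT
  refine ⟨q', hq', (v.drop k ++ v) ++ v.take k, _, _, ?_, hL1, hL2⟩
  intro hEq
  apply hne
  have h' := List.append_cancel_right hEq
  have h'' := List.append_cancel_left h'
  have e1 : π₁ = p :: π₁.tail := by
    apply head?_cons_tail
    rw [← List.head?_eq_getElem?]; exact h1.2.1
  have e2 : π₂ = p :: π₂.tail := by
    apply head?_cons_tail
    rw [← List.head?_eq_getElem?]; exact h2.2.1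
  rw [e1, e2, h'']

theorem eda_shift {Q A : Type} (M : NAuto Q A)
    (p : Q) (v : List A) (π₁ π₂ : List Q) (hne : π₁ ≠ π₂)
    (h1 : IsPath M.Δ π₁ v p p) (h2 : IsPath M.Δ π₂ v p p)
    (q' : Q) (hq' : q' ∈ M.F) (hmem : q' ∈ π₁ ∨ q' ∈ π₂) :
    EDAF M := by
  rcases hmem with h | h
  · exact eda_shift_aux M p v π₁ π₂ hne h1 h2 q' hq' h
  · exact eda_shift_aux M p v π₂ π₁ (Ne.symm hne) h2 h1 q' hq' h
end

section
/- For any NBA A and infinite word w, the reduced split tree T_rs(A, w) contains at most |Q| infinite paths. -/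
def stepSet {Q A : Type} (M : NAuto Q A) (P : Set Q) (a : A) : Set Q :=
  {q | ∃ p ∈ P, M.Δ p a q}

def splitLabelFrom {Q A : Type} (M : NAuto Q A) (w : ℕ → A) : Set Q → ℕ → List Bool → Set Q
  | P, _, [] => P
  | P, i, d :: u =>
      splitLabelFrom M w
        (if d then stepSet M P (w i) \ M.F else stepSet M P (w i) ∩ M.F) (i+1) u

def splitLabel {Q A : Type} (M : NAuto Q A) (w : ℕ → A) (u : List Bool) : Set Q :=
  splitLabelFrom M w M.Q0 0 u

def LeftOf (u v : List Bool) : Prop :=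
  u.length = v.length ∧ ∃ i, i < u.length ∧ u.take i = v.take i ∧
    u[i]? = some false ∧ v[i]? = some true

def rLabel {Q A : Type} (M : NAuto Q A) (w : ℕ → A) (u : List Bool) : Set Q :=
  splitLabel M w u \ ⋃ (v : List Bool) (_ : LeftOf v u), splitLabel M w v

def prefixNode (π : ℕ → Bool) (n : ℕ) : List Bool := List.ofFn (fun i : Fin n => π i)

def IsRSTPath {Q A : Type} (M : NAuto Q A) (w : ℕ → A) (π : ℕ → Bool) : Prop :=
  ∀ n, (rLabel M w (prefixNode π n)).Nonempty


lemma leftOf_total {u v : List Bool} (hlen : u.length = v.length) (hne : u ≠ v) :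
    LeftOf u v ∨ LeftOf v u := by
  classical
  have hex : ∃ i : ℕ, u[i]? ≠ v[i]? := by
    by_contra h
    push_neg at h
    exact hne (List.ext_getElem? h)
  set i := Nat.find hex with hi
  have hne' : u[i]? ≠ v[i]? := Nat.find_spec hex
  have hmin : ∀ j < i, u[j]? = v[j]? := by
    intro j hj
    have := Nat.find_min hex hj
    simpa using this
  have hilt : i < u.length := by
    by_contra h
    push_neg at h
    have h1 : u[i]? = none := List.getElem?_eq_none_iff.mpr h
    have h2 : v[i]? = none := List.getElem?_eq_none_iff.mpr (hlen ▸ h)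
    exact hne' (h1.trans h2.symm)
  have htake : u.take i = v.take i := by
    apply List.ext_getElem?
    intro j
    rcases lt_or_ge j i with hj | hj
    · rw [List.getElem?_take_of_lt hj, List.getElem?_take_of_lt hj, hmin j hj]
    · rw [List.getElem?_eq_none_iff.mpr, List.getElem?_eq_none_iff.mpr] <;>
        · simp only [List.length_take]
          omega
  obtain ⟨b, hb⟩ : ∃ b, u[i]? = some b := ⟨u[i]'hilt, List.getElem?_eq_getElem hilt⟩
  obtain ⟨b', hb'⟩ : ∃ b, v[i]? = some b := ⟨v[i]'(hlen ▸ hilt), List.getElem?_eq_getElem _⟩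
  have hbb : b ≠ b' := fun h => hne' (by rw [hb, hb', h])
  cases b <;> cases b'
  · exact absurd rfl hbb
  · exact Or.inl ⟨hlen, i, hilt, htake, hb, hb'⟩
  · exact Or.inr ⟨hlen.symm, i, hlen ▸ hilt, htake.symm, hb', hb⟩
  · exact absurd rfl hbb

lemma rLabel_disj {Q A : Type} (M : NAuto Q A) (w : ℕ → A) {u v : List Bool}
    (h : LeftOf u v) : Disjoint (rLabel M w u) (rLabel M w v) := by
  rw [Set.disjoint_left]
  rintro x ⟨hx, -⟩ ⟨-, hx'⟩
  exact hx' (Set.mem_iUnion₂.mpr ⟨u, h, hx⟩)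

theorem rst_few_paths {Q A : Type} [Fintype Q] (M : NAuto Q A) (w : ℕ → A) :
    {π : ℕ → Bool | IsRSTPath M w π}.Finite ∧
    Nat.card {π : ℕ → Bool | IsRSTPath M w π} ≤ Fintype.card Q := by
  classical
  set S := {π : ℕ → Bool | IsRSTPath M w π} with hS
  have key : ∀ T : Finset (ℕ → Bool), ↑T ⊆ S → T.card ≤ Fintype.card Q := by
    intro T hT
    have hwit : ∀ p : (ℕ → Bool) × (ℕ → Bool), p.1 ≠ p.2 → ∃ m, p.1 m ≠ p.2 m :=
      fun p hp => Function.ne_iff.mp hp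
    set n := (T ×ˢ T).sup
      (fun p => if h : p.1 = p.2 then 0 else Nat.find (hwit p h)) + 1 with hn
    have hinj : ∀ π ∈ T, ∀ π' ∈ T, prefixNode π n = prefixNode π' n → π = π' := by
      intro π hπ π' hπ' heq
      by_contra hne
      have hm : Nat.find (hwit (π, π') hne) < n := by
        have hmemprod : (π, π') ∈ T ×ˢ T := Finset.mem_product.mpr ⟨hπ, hπ'⟩
        have hle := Finset.le_sup
          (f := fun p : (ℕ → Bool) × (ℕ → Bool) =>
            if h : p.1 = p.2 then 0 else Nat.find (hwit p h)) hmemprod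
        simp only [dif_neg hne] at hle
        omega
      have hfeq := List.ofFn_inj.mp heq
      exact Nat.find_spec (hwit (π, π') hne)
        (congrFun hfeq ⟨Nat.find (hwit (π, π') hne), hm⟩)
    have hnonempty : ∀ π ∈ T, (rLabel M w (prefixNode π n)).Nonempty :=
      fun π hπ => hT hπ n
    rcases Finset.eq_empty_or_nonempty T with rfl | ⟨π₀, hπ₀⟩
    · simp
    have hQ : Nonempty Q := ⟨(hnonempty π₀ hπ₀).choose⟩
    let f : (ℕ → Bool) → Q := fun π =>
      if h : (rLabel M w (prefixNode π n)).Nonempty then h.choose else Classical.arbitrary Q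
    have hmem : ∀ π ∈ T, f π ∈ rLabel M w (prefixNode π n) := by
      intro π hπ
      simp only [f, dif_pos (hnonempty π hπ)]
      exact (hnonempty π hπ).choose_spec
    have hinjOn : Set.InjOn f ↑T := by
      intro π hπ π' hπ' heq
      by_contra hneq
      have hpp : prefixNode π n ≠ prefixNode π' n := fun h => hneq (hinj _ hπ _ hπ' h)
      have hd : Disjoint (rLabel M w (prefixNode π n)) (rLabel M w (prefixNode π' n)) := by
        rcases leftOf_total (by simp [prefixNode]) hpp with h | h
        · exact rLabel_disj M w h
        · exact (rLabel_disj M w h).symm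
      have h2 : f π ∈ rLabel M w (prefixNode π' n) := by
        rw [heq]; exact hmem π' hπ'
      exact Set.disjoint_left.mp hd (hmem π hπ) h2
    have := Finset.card_le_card_of_injOn f (fun a _ => Finset.mem_univ (f a)) hinjOn
    simpa [Finset.card_univ] using this
  have hfin : S.Finite := by
    by_contra h
    obtain ⟨T, hTs, hTc⟩ :=
      (show S.Infinite from h).exists_subset_card_eq (Fintype.card Q + 1)
    have := key T hTs
    omega
  refine ⟨hfin, ?_⟩
  have := key hfin.toFinset (by simp)
  rwa [Nat.card_coe_set_eq, Set.ncard_eq_toFinset_card S hfin]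
end

section
/- Bounded ambiguity of the disambiguation construction: the NBA A' constructed from A has at most |Q| accepting runs on each infinite word, where Q is the state set of A. -/
def primeStep {Q A : Type} (M : NAuto Q A) (a : A) :
    Set Q × Set Q → Set Q × Set Q → Prop := fun PS PS' =>
  PS'.2.Nonempty ∧
  ((PS'.1 = stepSet M PS.1 a ∧ PS'.2 = (stepSet M PS.2 a ∩ M.F) \ PS'.1) ∨
   (PS'.1 = stepSet M PS.1 a ∪ (stepSet M PS.2 a ∩ M.F) ∧
    PS'.2 = (stepSet M PS.2 a \ M.F) \ PS'.1))

def PrimeBuchiRuns {Q A : Type} (M : NAuto Q A) (w : ℕ → A) :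
    Set (ℕ → Set Q × Set Q) :=
  {ρ | ρ 0 = (∅, M.Q0) ∧ (∀ i, primeStep M (w i) (ρ i) (ρ (i+1))) ∧
       ∀ n, ∃ m ≥ n, (ρ m).2 ⊆ M.F}

section Aux

variable {Q A : Type}

lemma stepSet_mono (M : NAuto Q A) {P P' : Set Q} (h : P ⊆ P') (a : A) :
    stepSet M P a ⊆ stepSet M P' a := fun q ⟨p, hp, hd⟩ => ⟨p, h hp, hd⟩

lemma stepSet_union (M : NAuto Q A) (P S : Set Q) (a : A) :
    stepSet M (P ∪ S) a = stepSet M P a ∪ stepSet M S a := by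
  ext q
  constructor
  · rintro ⟨p, hp | hp, hd⟩
    · exact Or.inl ⟨p, hp, hd⟩
    · exact Or.inr ⟨p, hp, hd⟩
  · rintro (⟨p, hp, hd⟩ | ⟨p, hp, hd⟩)
    · exact ⟨p, Or.inl hp, hd⟩
    · exact ⟨p, Or.inr hp, hd⟩

lemma primeStep_P_sub (M : NAuto Q A) {a : A} {x y : Set Q × Set Q}
    (h : primeStep M a x y) : stepSet M x.1 a ⊆ y.1 := by
  rcases h.2 with ⟨h1, _⟩ | ⟨h1, _⟩
  · rw [h1]
  · rw [h1]; exact Set.subset_union_left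

lemma primeStep_all_sub (M : NAuto Q A) {a : A} {x y : Set Q × Set Q}
    (h : primeStep M a x y) : y.1 ∪ y.2 ⊆ stepSet M (x.1 ∪ x.2) a := by
  rw [stepSet_union]
  rcases h.2 with ⟨h1, h2⟩ | ⟨h1, h2⟩ <;> rw [h1, h2] <;> intro q hq
  · rcases hq with hq | hq
    · exact Or.inl hq
    · exact Or.inr hq.1.1
  · rcases hq with hq | hq
    · rcases hq with hq | hq
      · exact Or.inl hq
      · exact Or.inr hq.1
    · exact Or.inr hq.1.1

lemma primeStep_S_disj (M : NAuto Q A) {a : A} {x y : Set Q × Set Q}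
    (h : primeStep M a x y) : Disjoint y.2 y.1 := by
  rcases h.2 with ⟨_, h2⟩ | ⟨_, h2⟩ <;> rw [h2] <;>
    exact Set.disjoint_left.mpr fun q hq hq' => hq.2 hq'

lemma primeStep_diverge (M : NAuto Q A) {a : A} {z x y : Set Q × Set Q}
    (hx : primeStep M a z x) (hy : primeStep M a z y) (hne : x ≠ y) :
    x.1 ∪ x.2 ⊆ y.1 ∨ y.1 ∪ y.2 ⊆ x.1 := by
  rcases hx.2 with ⟨hx1, hx2⟩ | ⟨hx1, hx2⟩ <;> rcases hy.2 with ⟨hy1, hy2⟩ | ⟨hy1, hy2⟩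
  · exact absurd (Prod.ext (hx1.trans hy1.symm)
      (by rw [hx2, hy2, hx1, hy1])) hne
  · left; rw [hy1, hx1, hx2]
    intro q hq
    rcases hq with hq | hq
    · exact Or.inl hq
    · exact Or.inr hq.1
  · right; rw [hx1, hy1, hy2]
    intro q hq
    rcases hq with hq | hq
    · exact Or.inl hq
    · exact Or.inr hq.1
  · exact absurd (Prod.ext (hx1.trans hy1.symm)
      (by rw [hx2, hy2, hx1, hy1])) hne

/-- `x` is strictly to the left of `y`. -/
def PrimeLeft (x y : Set Q × Set Q) : Prop := x.1 ∪ x.2 ⊆ y.1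

lemma primeStep_propagate (M : NAuto Q A) {a : A} {x y x' y' : Set Q × Set Q}
    (hL : PrimeLeft x y) (hx : primeStep M a x x') (hy : primeStep M a y y') :
    PrimeLeft x' y' := by
  exact (primeStep_all_sub M hx).trans ((stepSet_mono M hL _).trans (primeStep_P_sub M hy))

lemma runs_eventually_disjoint {M : NAuto Q A} {w : ℕ → A}
    {ρ ρ' : ℕ → Set Q × Set Q} (hρ : ρ ∈ PrimeBuchiRuns M w)
    (hρ' : ρ' ∈ PrimeBuchiRuns M w) (hne : ρ ≠ ρ') :
    ∃ n, ∀ m ≥ n, Disjoint (ρ m).2 (ρ' m).2 := by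
  obtain ⟨n, hn⟩ : ∃ n, ρ n ≠ ρ' n := by
    by_contra h
    push_neg at h
    exact hne (funext h)
  -- divergence propagates
  have key : ∀ k, ρ k ≠ ρ' k → PrimeLeft (ρ k) (ρ' k) ∨ PrimeLeft (ρ' k) (ρ k) := by
    intro k
    induction k with
    | zero => intro h; exact absurd (hρ.1.trans hρ'.1.symm) h
    | succ k ih =>
      intro h
      by_cases hk : ρ k = ρ' k
      · have := primeStep_diverge M (hρ.2.1 k) (hk ▸ hρ'.2.1 k) h
        exact this
      · rcases ih hk with hL | hL
        · exact Or.inl (primeStep_propagate M hL (hρ.2.1 k) (hρ'.2.1 k))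
        · exact Or.inr (primeStep_propagate M hL (hρ'.2.1 k) (hρ.2.1 k))
  refine ⟨n, ?_⟩
  intro m hm
  -- first show divergence persists up to m
  have hdiff : ρ m ≠ ρ' m := by
    induction m with
    | zero =>
      have h0 : n = 0 := Nat.le_zero.mp hm
      exact h0 ▸ hn
    | succ m ih =>
      rcases Nat.lt_or_ge n (m+1) with hlt | hge
      · have hm' : ρ m ≠ ρ' m := ih (Nat.lt_succ_iff.mp hlt)
        rcases key m hm' with hL | hL
        · have hL' := primeStep_propagate M hL (hρ.2.1 m) (hρ'.2.1 m)
          intro heq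
          have hdisj := primeStep_S_disj M (hρ'.2.1 m)
          have hsub : (ρ (m+1)).2 ⊆ (ρ' (m+1)).1 :=
            fun q hq => hL' (Or.inr hq)
          obtain ⟨q, hq⟩ := (hρ.2.1 m).1
          exact Set.disjoint_left.mp hdisj (heq ▸ hq) (hsub hq)
        · have hL' := primeStep_propagate M hL (hρ'.2.1 m) (hρ.2.1 m)
          intro heq
          have hdisj := primeStep_S_disj M (hρ.2.1 m)
          have hsub : (ρ' (m+1)).2 ⊆ (ρ (m+1)).1 :=
            fun q hq => hL' (Or.inr hq)
          obtain ⟨q, hq⟩ := (hρ'.2.1 m).1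
          exact Set.disjoint_left.mp hdisj (heq.symm ▸ hq) (hsub hq)
      · have he : n = m + 1 := le_antisymm hm hge
        exact he ▸ hn
  rcases key m hdiff with hL | hL
  · rcases Nat.eq_zero_or_pos m with rfl | hpos
    · exact absurd (hρ.1.trans hρ'.1.symm) hdiff
    · obtain ⟨k, rfl⟩ := Nat.exists_eq_succ_of_ne_zero (Nat.pos_iff_ne_zero.mp hpos)
      have hdisj := primeStep_S_disj M (hρ'.2.1 k)
      have hsub : (ρ (k+1)).2 ⊆ (ρ' (k+1)).1 := fun q hq => hL (Or.inr hq)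
      exact Set.disjoint_left.mpr fun q hq hq' =>
        Set.disjoint_left.mp hdisj hq' (hsub hq)
  · rcases Nat.eq_zero_or_pos m with rfl | hpos
    · exact absurd (hρ.1.trans hρ'.1.symm) hdiff
    · obtain ⟨k, rfl⟩ := Nat.exists_eq_succ_of_ne_zero (Nat.pos_iff_ne_zero.mp hpos)
      have hdisj := primeStep_S_disj M (hρ.2.1 k)
      have hsub : (ρ' (k+1)).2 ⊆ (ρ (k+1)).1 := fun q hq => hL (Or.inr hq)
      exact Set.disjoint_left.mpr fun q hq hq' =>
        Set.disjoint_left.mp hdisj hq (hsub hq')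

lemma prime_finset_bound {Q A : Type} [Fintype Q] (M : NAuto Q A) (w : ℕ → A)
    (s : Finset (ℕ → Set Q × Set Q)) (hs : ↑s ⊆ PrimeBuchiRuns M w) :
    s.card ≤ Fintype.card Q := by
  classical
  rcases s.eq_empty_or_nonempty with rfl | ⟨ρ₀, hρ₀⟩
  · simp
  have hρ₀R := hs hρ₀
  obtain ⟨q₀, _⟩ := (hρ₀R.2.1 0).1
  -- divergence level function
  have hch : ∀ ρ ρ', ∃ n, ρ ∈ PrimeBuchiRuns M w → ρ' ∈ PrimeBuchiRuns M w → ρ ≠ ρ' →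
      ∀ m ≥ n, Disjoint (ρ m).2 (ρ' m).2 := by
    intro ρ ρ'
    by_cases h : ρ ∈ PrimeBuchiRuns M w ∧ ρ' ∈ PrimeBuchiRuns M w ∧ ρ ≠ ρ'
    · obtain ⟨n, hn⟩ := runs_eventually_disjoint h.1 h.2.1 h.2.2
      exact ⟨n, fun _ _ _ => hn⟩
    · exact ⟨0, fun h1 h2 h3 => absurd ⟨h1, h2, h3⟩ h⟩
  choose nf hnf using hch
  set N : ℕ := (s.sup fun ρ => s.sup fun ρ' => nf ρ ρ') + 1 with hN
  -- map each run to a witness state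
  set f : (ℕ → Set Q × Set Q) → Q :=
    fun ρ => if h : (ρ N).2.Nonempty then h.some else q₀ with hf
  have hmem : ∀ ρ ∈ s, f ρ ∈ (ρ N).2 := by
    intro ρ hρ
    have hne : (ρ N).2.Nonempty := by
      have := ((hs hρ).2.1 (N - 1)).1
      have hN1 : N - 1 + 1 = N := by omega
      rwa [hN1] at this
    simp only [hf, dif_pos hne]
    exact hne.some_mem
  have hinj : Set.InjOn f ↑s := by
    intro ρ hρ ρ' hρ' hfe
    by_contra hne
    have hle : nf ρ ρ' ≤ N := by
      calc nf ρ ρ' ≤ s.sup fun ρ'' => nf ρ ρ'' := Finset.le_sup (Finset.mem_coe.mp hρ')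
        _ ≤ s.sup fun ρ => s.sup fun ρ' => nf ρ ρ' := Finset.le_sup (f := fun ρ => s.sup fun ρ' => nf ρ ρ') (Finset.mem_coe.mp hρ)
        _ ≤ N := Nat.le_succ _
    have hdisj := hnf ρ ρ' (hs hρ) (hs hρ') hne N hle
    exact Set.disjoint_left.mp hdisj (hmem ρ hρ) (hfe ▸ hmem ρ' hρ')
  have := Finset.card_le_card_of_injOn f (fun a _ => Finset.mem_univ (f a)) hinj
  simpa using this

end Aux

theorem prime_bounded_ambiguity {Q A : Type} [Fintype Q] (M : NAuto Q A) (w : ℕ → A) :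
    (PrimeBuchiRuns M w).Finite ∧
    Nat.card (PrimeBuchiRuns M w) ≤ Fintype.card Q := by
  classical
  have hfin : (PrimeBuchiRuns M w).Finite := by
    by_contra hinf
    obtain ⟨t, hts, htc⟩ :=
      Set.Infinite.exists_subset_card_eq hinf (Fintype.card Q + 1)
    have := prime_finset_bound M w t hts
    omega
  refine ⟨hfin, ?_⟩
  have h1 : Nat.card (PrimeBuchiRuns M w) = hfin.toFinset.card := by
    rw [Nat.card_coe_set_eq, Set.ncard_eq_toFinset_card _ hfin]
  rw [h1]
  exact prime_finset_bound M w hfin.toFinset (by simp)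
end

section
/- If A satisfies EDA (two distinct v-labelled cycles at a state p) and p is reachable from an initial state by a word of length m, then for every k the number of distinct finite paths from Q₀ labelled by the word u v^k (where u reaches p) is at least 2^k; i.e., ambiguity of path prefixes grows exponentially. -/
section Aux
variable {Q A : Type} {δ : Q → A → Q → Prop}

inductive PathI (δ : Q → A → Q → Prop) : Q → List A → Q → List Q → Prop
  | nil (p : Q) : PathI δ p [] p [p]
  | cons {p q r : Q} {a : A} {w : List A} {π : List Q} :
      δ p a q → PathI δ q w r π → PathI δ p (a :: w) r (p :: π)

lemma PathI.head_tail {p w q π} (h : PathI δ p w q π) : π = p :: π.tail := by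
  cases h <;> rfl

lemma PathI.isPath {p w q π} (h : PathI δ p w q π) : IsPath δ π w p q := by
  induction h with
  | nil p => exact ⟨rfl, rfl, rfl, by intro i a s t hv; simp at hv⟩
  | cons hd tl ih =>
    obtain ⟨hl, hh, hg, hs⟩ := ih
    rename_i p q r a w π
    refine ⟨by simp [hl], rfl, ?_, ?_⟩
    · rw [tl.head_tail, List.getLast?_cons_cons, ← tl.head_tail]; exact hg
    · intro i a' s' t' hv hπ hπ'
      match i with
      | 0 =>
        simp at hv hπ
        rw [tl.head_tail] at hπ'
        simp at hπ'
        subst hv; subst hπ; subst hπ'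
        exact hd
      | Nat.succ j =>
        exact hs j a' s' t' hv hπ hπ'

lemma isPath_pathI : ∀ (w : List A) (π : List Q) (p q : Q),
    IsPath δ π w p q → PathI δ p w q π := by
  intro w
  induction w with
  | nil =>
    rintro π p q ⟨hl, hh, hg, _⟩
    match π, hl with
    | [x], _ =>
      simp at hh hg
      subst hh; subst hg
      exact PathI.nil _
  | cons a w ih =>
    rintro π p q ⟨hl, hh, hg, hs⟩
    match π with
    | [] => simp at hl
    | [s] => simp at hl
    | s :: t :: rest =>
      have hsp : s = p := by simpa using hh
      have step : δ s a t := hs 0 a s t rfl rfl rfl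
      subst hsp
      refine PathI.cons step (ih (t :: rest) t q ⟨?_, rfl, ?_, ?_⟩)
      · simp at hl ⊢; omega
      · rw [List.getLast?_cons_cons] at hg; exact hg
      · intro i a' s' t' h1 h2 h3
        exact hs (i+1) a' s' t' h1 h2 h3

lemma PathI.append : ∀ {p q r : Q} {w w' : List A} {π σ : List Q},
    PathI δ p w q π → PathI δ q w' r σ → PathI δ p (w ++ w') r (π ++ σ.tail) := by
  intro p q r w w' π σ h1
  induction h1 with
  | nil p =>
    intro h2
    cases h2 with
    | nil => exact PathI.nil _
    | cons hd tl => exact PathI.cons hd tl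
  | cons hd _ ih =>
    intro h2
    exact PathI.cons hd (ih h2)

lemma flatten_blocks_inj {L : ℕ} : ∀ (l₁ l₂ : List (List Q)), l₁.length = l₂.length →
    (∀ x ∈ l₁, x.length = L) → (∀ x ∈ l₂, x.length = L) →
    l₁.flatten = l₂.flatten → l₁ = l₂ := by
  intro l₁
  induction l₁ with
  | nil => intro l₂ h _ _ _; cases l₂ with
    | nil => rfl
    | cons _ _ => simp at h
  | cons x l ih =>
    intro l₂
    cases l₂ with
    | nil => intro h; simp at h
    | cons y l' =>
      intro hlen hb1 hb2 hf
      have hx : x.length = y.length := by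
        rw [hb1 x (by simp), hb2 y (by simp)]
      simp only [List.flatten_cons] at hf
      obtain ⟨hxy, hrest⟩ := List.append_inj hf hx
      subst hxy
      have := ih l' (by simpa using hlen) (fun z hz => hb1 z (by simp [hz]))
        (fun z hz => hb2 z (by simp [hz])) hrest
      rw [this]

lemma loops_path {p : Q} {v : List A} {π₁ π₂ : List Q}
    (h1 : PathI δ p v p π₁) (h2 : PathI δ p v p π₂) :
    ∀ bs : List Bool, PathI δ p ((List.replicate bs.length v).flatten) p
      (p :: (bs.map (fun b => (bif b then π₁ else π₂).tail)).flatten) := by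
  intro bs
  induction bs with
  | nil => exact PathI.nil p
  | cons b bs ih =>
    have hb : PathI δ p v p (bif b then π₁ else π₂) := by cases b <;> simpa
    have h := hb.append ih
    simp only [List.tail_cons] at h
    have heq : (bif b then π₁ else π₂) ++ (List.map (fun b => (bif b then π₁ else π₂).tail) bs).flatten
        = p :: (List.map (fun b => (bif b then π₁ else π₂).tail) (b :: bs)).flatten := by
      conv_lhs => rw [hb.head_tail]
      simp
    rw [heq] at h
    simpa [List.replicate_succ, List.flatten_cons] using h

end Aux

theorem eda_exponential_growth {Q A : Type} [Fintype Q] (M : NAuto Q A)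
    (p : Q) (v : List A) (hv : v ≠ []) (π₁ π₂ : List Q) (hne : π₁ ≠ π₂)
    (h1 : IsPath M.Δ π₁ v p p) (h2 : IsPath M.Δ π₂ v p p)
    (u : List A) (m : ℕ) (hm : u.length = m)
    (q0 : Q) (hq0 : q0 ∈ M.Q0) (π₀ : List Q) (h0 : IsPath M.Δ π₀ u q0 p)
    (k : ℕ) :
    {π : List Q | ∃ s ∈ M.Q0, ∃ t : Q,
        IsPath M.Δ π (u ++ (List.replicate k v).flatten) s t}.Finite ∧
    2 ^ k ≤ Nat.card {π : List Q | ∃ s ∈ M.Q0, ∃ t : Q,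
        IsPath M.Δ π (u ++ (List.replicate k v).flatten) s t} := by
  classical
  set S := {π : List Q | ∃ s ∈ M.Q0, ∃ t : Q,
      IsPath M.Δ π (u ++ (List.replicate k v).flatten) s t} with hS
  have hfin : S.Finite := by
    apply Set.Finite.subset (List.finite_length_eq Q ((u ++ (List.replicate k v).flatten).length + 1))
    rintro π ⟨s, _, t, hp⟩
    exact hp.1
  have hp1 := isPath_pathI v π₁ p p h1
  have hp2 := isPath_pathI v π₂ p p h2
  have hp0 := isPath_pathI u π₀ q0 p h0
  set f : Bool → List Q := fun b => (bif b then π₁ else π₂).tail with hf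
  have hne' : π₁.tail ≠ π₂.tail := by
    intro h
    apply hne
    rw [hp1.head_tail, hp2.head_tail, h]
  have hfinj : Function.Injective f := by
    intro b b' hbb
    cases b <;> cases b' <;> simp [f] at hbb <;> try rfl
    · exact absurd hbb.symm hne'
    · exact absurd hbb hne'
  have hb : ∀ b, (f b).length = v.length := by
    intro b
    have e1 := hp1.isPath.1
    have e2 := hp2.isPath.1
    cases b <;> simp [f, List.length_tail] <;> omega
  set F : (Fin k → Bool) → List Q := fun c => π₀ ++ ((List.ofFn c).map f).flatten with hF
  have hmem : ∀ c, F c ∈ S := by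
    intro c
    refine ⟨q0, hq0, p, ?_⟩
    have hl := loops_path hp1 hp2 (List.ofFn c)
    have hap := hp0.append hl
    simp only [List.tail_cons, List.length_ofFn] at hap
    exact hap.isPath
  have hFinj : Function.Injective F := by
    intro c c' h
    have h2 : ((List.ofFn c).map f).flatten = ((List.ofFn c').map f).flatten :=
      List.append_cancel_left h
    have h3 := flatten_blocks_inj (L := v.length) _ _ (by simp)
      (by rintro x hx; rw [List.mem_map] at hx; obtain ⟨b, _, rfl⟩ := hx; exact hb b)
      (by rintro x hx; rw [List.mem_map] at hx; obtain ⟨b, _, rfl⟩ := hx; exact hb b) h2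
    exact List.ofFn_injective (List.map_injective_iff.mpr hfinj h3)
  refine ⟨hfin, ?_⟩
  have : Finite ↥S := hfin.to_subtype
  have hF' : Function.Injective (fun c => (⟨F c, hmem c⟩ : ↥S)) := by
    intro c c' h
    exact hFinj (congrArg Subtype.val h)
  calc 2 ^ k = Nat.card (Fin k → Bool) := by simp [Nat.card_eq_fintype_card]
    _ ≤ Nat.card ↥S := Nat.card_le_card_of_injective _ hF'
end
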